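/- arXiv:1612.08907 — 2 statements merged into one kernel-verified Lean document; each statement's English description precedes it below -/
import Mathlib

section
/- Let J be the 4×4 block matrix [[0, -I₂], [I₂, 0]]. For the Hurwitz matrix Γ one has Γ(e^{θJ} ξ) = Γ(ξ) e^{θJ} for all θ ∈ ℝ and ξ ∈ ℝ⁴. -/
open Matrix

/-- The 3×4 Hurwitz matrix of the KS transformation. -/
def hurwitz (ξ : Fin 4 → ℝ) : Matrix (Fin 3) (Fin 4) ℝ :=
  !![ξ 0, -ξ 1, -ξ 2, ξ 3;
     ξ 1,  ξ 0, -ξ 3, -ξ 2;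
     ξ 2,  ξ 3,  ξ 0,  ξ 1]

/-- The 4×4 matrix `J = [[0, -I₂], [I₂, 0]]`. -/
def Jmat : Matrix (Fin 4) (Fin 4) ℝ :=
  !![0, 0, -1,  0;
     0, 0,  0, -1;
     1, 0,  0,  0;
     0, 1,  0,  0]

lemma Jmat_sq : Jmat * Jmat = -1 := by
  ext i j
  fin_cases i <;> fin_cases j <;>
    simp [Matrix.mul_apply, Fin.sum_univ_four, Jmat, Matrix.one_apply,
      Matrix.vecHead, Matrix.vecTail]

attribute [local instance] Matrix.linftyOpNormedRing Matrix.linftyOpNormedAlgebra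

noncomputable def φ : ℂ →ₐ[ℝ] Matrix (Fin 4) (Fin 4) ℝ := Complex.liftAux Jmat Jmat_sq

lemma exp_J (θ : ℝ) : NormedSpace.exp (θ • Jmat) = Real.cos θ • 1 + Real.sin θ • Jmat := by
  have hc : Continuous φ := φ.toLinearMap.continuous_of_finiteDimensional
  have h1 : φ (θ • Complex.I) = θ • Jmat := by
    simp [φ, Complex.liftAux_apply]
  have := NormedSpace.map_exp φ hc (θ • Complex.I)
  rw [h1] at this
  refine this.symm.trans ?_
  rw [← Complex.exp_eq_exp_ℂ]
  have : Complex.exp (θ • Complex.I) = Complex.ofReal (Real.cos θ) + Complex.ofReal (Real.sin θ) * Complex.I := by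
    rw [Complex.real_smul, Complex.exp_mul_I, Complex.ofReal_cos, Complex.ofReal_sin]
  rw [this]
  simp [φ, Complex.liftAux_apply, Algebra.algebraMap_eq_smul_one, Complex.cos_ofReal_re, Complex.sin_ofReal_re]

/-- Equivariance of the Hurwitz matrix: `Γ(e^{θJ} ξ) = Γ(ξ) e^{θJ}`. -/
theorem hurwitz_equivariant (θ : ℝ) (ξ : Fin 4 → ℝ) :
    hurwitz ((NormedSpace.exp (θ • Jmat)).mulVec ξ) =
      hurwitz ξ * NormedSpace.exp (θ • Jmat) := by
  rw [exp_J]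
  ext i j
  fin_cases i <;> fin_cases j <;>
    simp [hurwitz, Jmat, Matrix.mulVec, Matrix.mul_apply, Fin.sum_univ_four, dotProduct,
      Matrix.one_apply, Matrix.vecHead, Matrix.vecTail] <;> ring
end

section
/- Lyapunov–Schmidt norm estimate: Let E = E₁ × E₂ be Banach spaces, G = (G₁, G₂) : Z → E a C¹ map on an open set Z = Z₁ × Z₂ with ‖DG(q,x)‖ ≤ C and ‖(D_x G₂(q,x))⁻¹‖ ≤ C on Z. Suppose x = x(q) is a C¹ solution of G₂(q, x(q)) = 0 on Z₁, and set Γ(q) = G₁(q, x(q)). Then for each q, the derivative DΓ(q) is invertible if and only if DG(q, x(q)) is invertible, and there is a constant c depending only on C such that ‖(DΓ(q))⁻¹‖ ≤ ‖(DG(q,x(q)))⁻¹‖ ≤ c(1 + ‖(DΓ(q))⁻¹‖). -/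
open ContinuousLinearMap

section Shear
variable {E₁ E₂ : Type*} [NormedAddCommGroup E₁] [NormedSpace ℝ E₁]
  [NormedAddCommGroup E₂] [NormedSpace ℝ E₂]

/-- shear `(u,v) ↦ (u + Y v, v)` -/
def shearU (Y : E₂ →L[ℝ] E₁) : (E₁ × E₂) ≃L[ℝ] E₁ × E₂ :=
  ContinuousLinearEquiv.equivOfInverse
    ((fst ℝ E₁ E₂ + Y.comp (snd ℝ E₁ E₂)).prod (snd ℝ E₁ E₂))
    ((fst ℝ E₁ E₂ - Y.comp (snd ℝ E₁ E₂)).prod (snd ℝ E₁ E₂))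
    (fun p => by simp) (fun p => by simp)

/-- shear `(u,v) ↦ (u, v + X u)` -/
def shearL (X : E₁ →L[ℝ] E₂) : (E₁ × E₂) ≃L[ℝ] E₁ × E₂ :=
  ContinuousLinearEquiv.equivOfInverse
    ((fst ℝ E₁ E₂).prod (snd ℝ E₁ E₂ + X.comp (fst ℝ E₁ E₂)))
    ((fst ℝ E₁ E₂).prod (snd ℝ E₁ E₂ - X.comp (fst ℝ E₁ E₂)))
    (fun p => by simp) (fun p => by simp)

@[simp] theorem shearU_apply (Y : E₂ →L[ℝ] E₁) (p : E₁ × E₂) :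
    shearU Y p = (p.1 + Y p.2, p.2) := rfl
@[simp] theorem shearU_symm_apply (Y : E₂ →L[ℝ] E₁) (p : E₁ × E₂) :
    (shearU Y).symm p = (p.1 - Y p.2, p.2) := rfl
@[simp] theorem shearL_apply (X : E₁ →L[ℝ] E₂) (p : E₁ × E₂) :
    shearL X p = (p.1, p.2 + X p.1) := rfl
@[simp] theorem shearL_symm_apply (X : E₁ →L[ℝ] E₂) (p : E₁ × E₂) :
    (shearL X).symm p = (p.1, p.2 - X p.1) := rfl
end Shear

set_option maxHeartbeats 4000000 in
/-- Lyapunov–Schmidt norm estimate: if `G = (G₁, G₂) : Z₁ × Z₂ → E₁ × E₂` is `C¹` with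
`‖DG‖ ≤ C` and `‖(D_x G₂)⁻¹‖ ≤ C` on `Z₁ × Z₂`, and `x(q)` solves `G₂(q, x(q)) = 0`, then
for `Γ(q) = G₁(q, x(q))` the derivatives `DΓ(q)` and `DG(q, x(q))` are invertible
simultaneously and `‖(DΓ(q))⁻¹‖ ≤ ‖(DG(q,x(q)))⁻¹‖ ≤ c(1 + ‖(DΓ(q))⁻¹‖)` with
`c` depending only on `C`. -/
theorem lyapunov_schmidt_estimate
    {E₁ E₂ : Type*} [NormedAddCommGroup E₁] [NormedSpace ℝ E₁] [CompleteSpace E₁]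
    [NormedAddCommGroup E₂] [NormedSpace ℝ E₂] [CompleteSpace E₂]
    (C : ℝ) (hC : 0 < C) :
    ∃ c : ℝ, 0 < c ∧
      ∀ (Z₁ : Set E₁) (Z₂ : Set E₂), IsOpen Z₁ → IsOpen Z₂ →
      ∀ G : E₁ × E₂ → E₁ × E₂, ContDiffOn ℝ 1 G (Z₁ ×ˢ Z₂) →
      (∀ z ∈ Z₁ ×ˢ Z₂, ‖fderiv ℝ G z‖ ≤ C) →
      (∀ z ∈ Z₁ ×ˢ Z₂, ∃ T : E₂ ≃L[ℝ] E₂,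
        (T : E₂ →L[ℝ] E₂) = fderiv ℝ (fun x => (G (z.1, x)).2) z.2 ∧
        ‖(T.symm : E₂ →L[ℝ] E₂)‖ ≤ C) →
      ∀ x : E₁ → E₂, ContDiffOn ℝ 1 x Z₁ →
      (∀ q ∈ Z₁, x q ∈ Z₂ ∧ (G (q, x q)).2 = 0) →
      ∀ q ∈ Z₁,
        ((∃ TΓ : E₁ ≃L[ℝ] E₁,
            (TΓ : E₁ →L[ℝ] E₁) = fderiv ℝ (fun q' => (G (q', x q')).1) q) ↔
          (∃ TG : (E₁ × E₂) ≃L[ℝ] E₁ × E₂,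
            (TG : E₁ × E₂ →L[ℝ] E₁ × E₂) = fderiv ℝ G (q, x q))) ∧
        ∀ (TΓ : E₁ ≃L[ℝ] E₁) (TG : (E₁ × E₂) ≃L[ℝ] E₁ × E₂),
          (TΓ : E₁ →L[ℝ] E₁) = fderiv ℝ (fun q' => (G (q', x q')).1) q →
          (TG : E₁ × E₂ →L[ℝ] E₁ × E₂) = fderiv ℝ G (q, x q) →
          ‖(TΓ.symm : E₁ →L[ℝ] E₁)‖ ≤ ‖(TG.symm : E₁ × E₂ →L[ℝ] E₁ × E₂)‖ ∧
          ‖(TG.symm : E₁ × E₂ →L[ℝ] E₁ × E₂)‖ ≤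
            c * (1 + ‖(TΓ.symm : E₁ →L[ℝ] E₁)‖) := by
  refine ⟨(1 + C^2)^2 * (1 + C), by positivity, ?_⟩
  intro Z₁ Z₂ hZ₁ hZ₂ G hG hGnorm hGinv x hx hsol q hq
  have hxZ : x q ∈ Z₂ := (hsol q hq).1
  have hz : ((q, x q) : E₁ × E₂) ∈ Z₁ ×ˢ Z₂ := ⟨hq, hxZ⟩
  set M := fderiv ℝ G (q, x q) with hMdef
  have hMd : DifferentiableAt ℝ G (q, x q) :=
    (hG.differentiableOn one_ne_zero).differentiableAt ((hZ₁.prod hZ₂).mem_nhds hz)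
  have hMnorm : ‖M‖ ≤ C := hGnorm _ hz
  obtain ⟨T, hT, hTnorm⟩ := hGinv (q, x q) hz
  -- the partial derivative in the second variable is the (inr)-block of M
  have hQ : HasFDerivAt (fun y => (G (q, y)).2)
      ((snd ℝ E₁ E₂).comp (M.comp (inr ℝ E₁ E₂))) (x q) := by
    have h1 : HasFDerivAt (fun y : E₂ => G (q, y)) (M.comp (inr ℝ E₁ E₂)) (x q) :=
      HasFDerivAt.comp (x q) hMd.hasFDerivAt (hasFDerivAt_prodMk_right q (x q))
    exact h1.snd
  have hTQ : (T : E₂ →L[ℝ] E₂) = (snd ℝ E₁ E₂).comp (M.comp (inr ℝ E₁ E₂)) :=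
    hT.trans hQ.fderiv
  have hTv : ∀ v : E₂, T v = (M ((0:E₁), v)).2 := fun v => by
    have := ContinuousLinearMap.ext_iff.mp hTQ v
    simpa using this
  have hxd : DifferentiableAt ℝ x q :=
    (hx.differentiableOn one_ne_zero).differentiableAt (hZ₁.mem_nhds hq)
  set D := fderiv ℝ x q with hDdef
  have hGc : HasFDerivAt (fun q' => G (q', x q'))
      (M.comp ((ContinuousLinearMap.id ℝ E₁).prod D)) q :=
    HasFDerivAt.comp q hMd.hasFDerivAt ((hasFDerivAt_id q).prodMk hxd.hasFDerivAt)
  set Γ' := fderiv ℝ (fun q' => (G (q', x q')).1) q with hΓ'def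
  have hΓ'eq : Γ' = (fst ℝ E₁ E₂).comp
      (M.comp ((ContinuousLinearMap.id ℝ E₁).prod D)) := hGc.fst.fderiv
  have hev : (fun q' => (G (q', x q')).2) =ᶠ[nhds q] fun _ => (0 : E₂) :=
    Filter.eventuallyEq_of_mem (hZ₁.mem_nhds hq) fun q' hq' => (hsol q' hq').2
  have h0 : HasFDerivAt (fun q' => (G (q', x q')).2) 0 q :=
    (hasFDerivAt_const (𝕜 := ℝ) (0:E₂) q).congr_of_eventuallyEq hev
  have hzero : (snd ℝ E₁ E₂).comp
      (M.comp ((ContinuousLinearMap.id ℝ E₁).prod D)) = 0 := hGc.snd.unique h0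
  have hsplit : ∀ (u : E₁) (v : E₂), M (u, v) = M (u, 0) + M (0, v) := fun u v => by
    have h : ((u, v) : E₁ × E₂) = (u, 0) + (0, v) := by simp
    rw [h, map_add]
  have hM2 : ∀ v : E₁, (M (v, D v)).2 = 0 := fun v => by
    have := ContinuousLinearMap.ext_iff.mp hzero v
    simpa using this
  have hDv : ∀ v : E₁, D v = -(T.symm ((M (v, (0:E₂))).2)) := fun v => by
    have h1 : (M (v, 0)).2 + (M ((0:E₁), D v)).2 = 0 := by
      have := hM2 v; rw [hsplit v (D v)] at this; simpa using this
    have h2 : T (D v) = -((M (v, 0)).2) := by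
      rw [hTv (D v), eq_neg_iff_add_eq_zero, add_comm]; exact h1
    calc D v = T.symm (T (D v)) := (T.symm_apply_apply _).symm
      _ = -(T.symm ((M (v, (0:E₂))).2)) := by rw [h2, map_neg]
  have hTDu : ∀ u : E₁, T (D u) = -((M (u, (0:E₂))).2) := fun u => by
    rw [hDv u, map_neg, T.apply_symm_apply]
  have hΓv : ∀ v : E₁, Γ' v = (M (v, 0)).1 + (M ((0:E₁), D v)).1 := fun v => by
    rw [hΓ'eq]
    simp only [coe_comp', Function.comp_apply, prod_apply, coe_id', id_eq, coe_fst']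
    rw [hsplit v (D v)]; rfl
  set B : E₂ →L[ℝ] E₁ := (fst ℝ E₁ E₂).comp (M.comp (inr ℝ E₁ E₂)) with hBdef
  have hBv : ∀ v : E₂, B v = (M ((0:E₁), v)).1 := fun v => rfl
  set Y : E₂ →L[ℝ] E₁ := B.comp (T.symm : E₂ →L[ℝ] E₂) with hYdef
  set L := shearL (-D) with hLdef
  set U := shearU Y with hUdef
  -- the key factorization
  have key : ∀ TΓ : E₁ ≃L[ℝ] E₁, (TΓ : E₁ →L[ℝ] E₁) = Γ' →
      ∀ p : E₁ × E₂, (L.trans ((TΓ.prodCongr T).trans U)) p = M p := by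
    intro TΓ hTΓ p
    obtain ⟨u, v⟩ := p
    have hTΓu : ∀ w, TΓ w = Γ' w := fun w => by
      rw [← hTΓ]; rfl
    show U ((TΓ.prodCongr T) (L (u, v))) = M (u, v)
    rw [hLdef, hUdef, shearL_apply]
    simp only [ContinuousLinearEquiv.prodCongr_apply, shearU_apply, neg_apply]
    have e2 : T (v + -D u) = (M (u, 0)).2 + (M ((0:E₁), v)).2 := by
      rw [map_add, map_neg, hTDu, hTv]; abel
    have e1 : TΓ u + Y (T (v + -D u)) = (M (u, 0)).1 + (M ((0:E₁), v)).1 := by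
      have : Y (T (v + -D u)) = B (v + -D u) := by
        rw [hYdef]; simp only [coe_comp', Function.comp_apply]
        rw [ContinuousLinearEquiv.coe_coe, T.symm_apply_apply]
      rw [this, hTΓu u, hΓv u, map_add, map_neg, hBv, hBv]
      abel
    rw [hsplit u v]
    exact Prod.ext (by simpa using e1) (by simpa using e2)
  have hLsymm : ∀ p : E₁ × E₂, L.symm p = (p.1, p.2 + D p.1) := fun p => by
    rw [hLdef, shearL_symm_apply]; simp
  have hYT : ∀ v : E₂, Y (T v) = B v := fun v => by
    rw [hYdef]
    simp only [coe_comp', Function.comp_apply]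
    rw [ContinuousLinearEquiv.coe_coe, T.symm_apply_apply]
  constructor
  · constructor
    · rintro ⟨TΓ, hTΓ⟩
      refine ⟨L.trans ((TΓ.prodCongr T).trans U), ContinuousLinearMap.ext fun p => ?_⟩
      exact key TΓ hTΓ p
    · rintro ⟨TG, hTG⟩
      set N := L.symm.trans (TG.trans U.symm) with hNdef
      have hMp : ∀ p, TG p = M p := fun p => by rw [← hTG]; rfl
      have hN : ∀ (u : E₁) (v : E₂), N (u, v) = (Γ' u, T v) := by
        intro u v
        show U.symm (TG (L.symm (u, v))) = _
        rw [hLsymm, hMp]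
        simp only
        rw [hsplit u (v + D u), hUdef, shearU_symm_apply]
        have hp2 : (M (u, 0) + M ((0:E₁), v + D u)).2 = T v := by
          have h : (M ((0:E₁), v + D u)).2 = T (v + D u) := (hTv _).symm
          rw [Prod.snd_add, h, map_add, hTDu]; abel
        have hp1 : (M (u, 0) + M ((0:E₁), v + D u)).1 = Γ' u + B v := by
          have h : (M ((0:E₁), v + D u)).1 = B (v + D u) := (hBv _).symm
          rw [Prod.fst_add, h, map_add, hΓv u, hBv]
          abel
        rw [hp1, hp2, hYT]
        exact Prod.ext (add_sub_cancel_right _ _) rfl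
      have hNu0 : ∀ u : E₁, N (u, 0) = (Γ' u, 0) := fun u => by
        have h := hN u 0; rwa [map_zero] at h
      set f : E₁ →L[ℝ] E₁ :=
        (fst ℝ E₁ E₂).comp ((N : E₁ × E₂ →L[ℝ] E₁ × E₂).comp (inl ℝ E₁ E₂)) with hfdef
      set g : E₁ →L[ℝ] E₁ :=
        (fst ℝ E₁ E₂).comp ((N.symm : E₁ × E₂ →L[ℝ] E₁ × E₂).comp (inl ℝ E₁ E₂)) with hgdef
      have hfu : ∀ u, f u = Γ' u := fun u => by
        have : f u = (N (u, 0)).1 := rfl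
        rw [this, hNu0]
      have hgu : ∀ u, g u = (N.symm (u, 0)).1 := fun u => rfl
      have hgf : ∀ u, g (f u) = u := fun u => by
        rw [hfu, hgu, ← hNu0, N.symm_apply_apply]
      have hfg : ∀ u, f (g u) = u := fun u => by
        have hNp : N (N.symm (u, 0)) = (u, 0) := N.apply_symm_apply _
        have h2 := hN (N.symm (u, 0)).1 (N.symm (u, 0)).2
        rw [Prod.mk.eta, hNp] at h2
        have hT0 : T (N.symm (u, 0)).2 = 0 := (congrArg Prod.snd h2).symm
        have hz2 : (N.symm (u, 0)).2 = 0 := by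
          have h3 : T (N.symm (u, 0)).2 = T 0 := by rw [hT0, map_zero]
          exact T.injective h3
        have h1 : Γ' (N.symm (u, 0)).1 = u := (congrArg Prod.fst h2).symm
        rw [hgu, hfu, h1]
      exact ⟨ContinuousLinearEquiv.equivOfInverse f g hgf hfg, by ext u; exact hfu u⟩
  · intro TΓ TG hTΓ hTG
    set s := ‖(TΓ.symm : E₁ →L[ℝ] E₁)‖ with hsdef
    have hs0 : 0 ≤ s := norm_nonneg _
    have hE' : ∀ p, (L.trans ((TΓ.prodCongr T).trans U)) p = M p := key TΓ hTΓ
    have hMp : ∀ p, TG p = M p := fun p => by rw [← hTG]; rfl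
    have hsymm : ∀ p, TG.symm p = (L.trans ((TΓ.prodCongr T).trans U)).symm p := fun p => by
      have h1 : (L.trans ((TΓ.prodCongr T).trans U)) (TG.symm p) = p := by
        rw [hE', ← hMp, TG.apply_symm_apply]
      calc TG.symm p
          = (L.trans ((TΓ.prodCongr T).trans U)).symm
              ((L.trans ((TΓ.prodCongr T).trans U)) (TG.symm p)) :=
            ((L.trans ((TΓ.prodCongr T).trans U)).symm_apply_apply _).symm
        _ = _ := by rw [h1]
    have hEsymm : ∀ p : E₁ × E₂,
        (L.trans ((TΓ.prodCongr T).trans U)).symm p = L.symm ((TΓ.prodCongr T).symm (U.symm p)) :=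
      fun p => rfl
    have hn1 : ∀ u : E₁, ‖((u, (0:E₂)) : E₁ × E₂)‖ = ‖u‖ := fun u => by
      simp [Prod.norm_def]
    have hn2 : ∀ v : E₂, ‖(((0:E₁), v) : E₁ × E₂)‖ = ‖v‖ := fun v => by
      simp [Prod.norm_def]
    have hBn : ∀ v : E₂, ‖B v‖ ≤ C * ‖v‖ := fun v => by
      rw [hBv]
      calc ‖(M ((0:E₁), v)).1‖ ≤ ‖M ((0:E₁), v)‖ := norm_fst_le _
        _ ≤ ‖M‖ * ‖(((0:E₁), v) : E₁ × E₂)‖ := M.le_opNorm _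
        _ ≤ C * ‖v‖ := by rw [hn2]; exact mul_le_mul_of_nonneg_right hMnorm (norm_nonneg v)
    have hTs : ∀ v : E₂, ‖T.symm v‖ ≤ C * ‖v‖ := fun v =>
      le_trans ((T.symm : E₂ →L[ℝ] E₂).le_opNorm v)
        (mul_le_mul_of_nonneg_right hTnorm (norm_nonneg v))
    have hDn : ∀ v : E₁, ‖D v‖ ≤ C ^ 2 * ‖v‖ := fun v => by
      rw [hDv v, norm_neg]
      calc ‖T.symm ((M (v, 0)).2)‖ ≤ C * ‖(M (v, 0)).2‖ := hTs _
        _ ≤ C * (C * ‖v‖) := by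
            refine mul_le_mul_of_nonneg_left ?_ hC.le
            calc ‖(M (v, 0)).2‖ ≤ ‖M (v, 0)‖ := norm_snd_le _
              _ ≤ ‖M‖ * ‖((v, (0:E₂)) : E₁ × E₂)‖ := M.le_opNorm _
              _ ≤ C * ‖v‖ := by
                  rw [hn1]; exact mul_le_mul_of_nonneg_right hMnorm (norm_nonneg v)
        _ = C ^ 2 * ‖v‖ := by ring
    have hYn : ∀ v : E₂, ‖Y v‖ ≤ C ^ 2 * ‖v‖ := fun v => by
      have : Y v = B (T.symm v) := rfl
      rw [this]
      calc ‖B (T.symm v)‖ ≤ C * ‖T.symm v‖ := hBn _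
        _ ≤ C * (C * ‖v‖) := mul_le_mul_of_nonneg_left (hTs v) hC.le
        _ = C ^ 2 * ‖v‖ := by ring
    have hcomp : ∀ u : E₁, TG.symm (u, (0:E₂)) = (TΓ.symm u, D (TΓ.symm u)) := fun u => by
      rw [hsymm, hEsymm]
      have h1 : U.symm ((u, (0:E₂)) : E₁ × E₂) = (u, 0) := by
        rw [hUdef, shearU_symm_apply]; simp
      have h2 : (TΓ.prodCongr T).symm ((u, (0:E₂)) : E₁ × E₂) = (TΓ.symm u, 0) := by
        simp [ContinuousLinearEquiv.prodCongr_symm]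
      rw [h1, h2, hLsymm]
      simp
    constructor
    · refine (TΓ.symm : E₁ →L[ℝ] E₁).opNorm_le_bound (norm_nonneg _) fun u => ?_
      have h : TΓ.symm u = (TG.symm (u, (0:E₂))).1 := by rw [hcomp u]
      calc ‖TΓ.symm u‖ = ‖(TG.symm (u, (0:E₂))).1‖ := by rw [h]
        _ ≤ ‖TG.symm (u, (0:E₂))‖ := norm_fst_le _
        _ ≤ ‖(TG.symm : E₁ × E₂ →L[ℝ] E₁ × E₂)‖ * ‖((u, (0:E₂)) : E₁ × E₂)‖ :=
            (TG.symm : E₁ × E₂ →L[ℝ] E₁ × E₂).le_opNorm _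
        _ = ‖(TG.symm : E₁ × E₂ →L[ℝ] E₁ × E₂)‖ * ‖u‖ := by rw [hn1]
    · have hstepU : ∀ w : E₁ × E₂, ‖U.symm w‖ ≤ (1 + C ^ 2) * ‖w‖ := fun w => by
        rw [hUdef, shearU_symm_apply, Prod.norm_def]
        refine max_le ?_ ?_
        · calc ‖w.1 - Y w.2‖ ≤ ‖w.1‖ + ‖Y w.2‖ := norm_sub_le _ _
            _ ≤ ‖w‖ + C ^ 2 * ‖w.2‖ := add_le_add (norm_fst_le w) (hYn _)
            _ ≤ ‖w‖ + C ^ 2 * ‖w‖ := by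
                have := norm_snd_le w
                nlinarith [sq_nonneg C]
            _ = (1 + C ^ 2) * ‖w‖ := by ring
        · nlinarith [norm_snd_le w, norm_nonneg w, sq_nonneg C]
      have hstepL : ∀ w : E₁ × E₂, ‖L.symm w‖ ≤ (1 + C ^ 2) * ‖w‖ := fun w => by
        rw [hLsymm, Prod.norm_def]
        refine max_le ?_ ?_
        · nlinarith [norm_fst_le w, norm_nonneg w, sq_nonneg C]
        · calc ‖w.2 + D w.1‖ ≤ ‖w.2‖ + ‖D w.1‖ := norm_add_le _ _
            _ ≤ ‖w‖ + C ^ 2 * ‖w.1‖ := add_le_add (norm_snd_le w) (hDn _)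
            _ ≤ ‖w‖ + C ^ 2 * ‖w‖ := by
                have := norm_fst_le w
                nlinarith [sq_nonneg C]
            _ = (1 + C ^ 2) * ‖w‖ := by ring
      have hstepD : ∀ w : E₁ × E₂, ‖(TΓ.prodCongr T).symm w‖ ≤ (C + s) * ‖w‖ := fun w => by
        have h : (TΓ.prodCongr T).symm w = (TΓ.symm w.1, T.symm w.2) := rfl
        rw [h, Prod.norm_def]
        refine max_le ?_ ?_
        · calc ‖TΓ.symm w.1‖ ≤ s * ‖w.1‖ := by
                rw [hsdef]; exact (TΓ.symm : E₁ →L[ℝ] E₁).le_opNorm _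
            _ ≤ (C + s) * ‖w‖ := by nlinarith [norm_fst_le w, norm_nonneg w, norm_nonneg w.1, hs0, hC.le]
        · calc ‖T.symm w.2‖ ≤ C * ‖w.2‖ := hTs _
            _ ≤ (C + s) * ‖w‖ := by nlinarith [norm_snd_le w, norm_nonneg w, norm_nonneg w.2, hs0, hC.le]
      refine (TG.symm : E₁ × E₂ →L[ℝ] E₁ × E₂).opNorm_le_bound (by positivity) fun p => ?_
      have hchain : ‖TG.symm p‖ ≤ (1 + C ^ 2) * ((C + s) * ((1 + C ^ 2) * ‖p‖)) := by
        rw [hsymm p, hEsymm p]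
        calc ‖L.symm ((TΓ.prodCongr T).symm (U.symm p))‖
            ≤ (1 + C ^ 2) * ‖(TΓ.prodCongr T).symm (U.symm p)‖ := hstepL _
          _ ≤ (1 + C ^ 2) * ((C + s) * ‖U.symm p‖) := by
              refine mul_le_mul_of_nonneg_left (hstepD _) (by positivity)
          _ ≤ (1 + C ^ 2) * ((C + s) * ((1 + C ^ 2) * ‖p‖)) := by
              refine mul_le_mul_of_nonneg_left
                (mul_le_mul_of_nonneg_left (hstepU _) (by positivity)) (by positivity)
      refine hchain.trans ?_
      have hCs : (1 + C ^ 2) * ((C + s) * ((1 + C ^ 2) * ‖p‖)) ≤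
          (1 + C ^ 2) ^ 2 * (1 + C) * (1 + s) * ‖p‖ := by
        nlinarith [norm_nonneg p, sq_nonneg C, sq_nonneg (1 + C ^ 2), hC.le, hs0,
          mul_nonneg hC.le hs0, mul_nonneg (mul_nonneg hC.le hs0) (norm_nonneg p),
          mul_nonneg (sq_nonneg (1 + C ^ 2)) (mul_nonneg (mul_nonneg hC.le hs0) (norm_nonneg p))]
      exact hCs.trans_eq (by ring)
end
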